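/- Let n ≥ 3 and let i, j ∈ {1,…,n−1} with |i−j| = 1. Then the element B_{ij} = σ_i + σ_j − (q−1) is invertible in the singular Hecke algebra H(SB_n), with inverse −q^{−1}(q+1)^{−2} (q(q−1) − 2qσ_i − 2qσ_j − (q−1)σ_iσ_j − (q−1)σ_jσ_i + 2σ_iσ_jσ_i). -/

import Mathlib

noncomputable section
open scoped Classical

/-- `𝕂 = ℂ(q)`. -/
abbrev K : Type := RatFunc ℂ
/-- `𝕂(z)`. -/
abbrev Kz : Type := RatFunc K
/-- the variable `q`. -/
def q : K := RatFunc.X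
/-- the variable `z`. -/
def z : Kz := RatFunc.X

/-- Generators of the singular braid monoid on `n` strands:
`s i` is `σ_{i+1}`, `si i` is `σ_{i+1}⁻¹`, `t i` is `τ_{i+1}` (0-indexed `i`). -/
inductive SBGen (n : ℕ) : Type
  | s (i : Fin (n - 1))
  | si (i : Fin (n - 1))
  | t (i : Fin (n - 1))

/-- `|i - j| = 1`. -/
def adj {n : ℕ} (i j : Fin (n - 1)) : Prop := (i : ℕ) + 1 = (j : ℕ) ∨ (j : ℕ) + 1 = (i : ℕ)
/-- `|i - j| ≥ 2`. -/
def far {n : ℕ} (i j : Fin (n - 1)) : Prop := (i : ℕ) + 2 ≤ (j : ℕ) ∨ (j : ℕ) + 2 ≤ (i : ℕ)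

open FreeMonoid in
/-- The defining relations of the singular braid monoid. -/
inductive SBRel (n : ℕ) : FreeMonoid (SBGen n) → FreeMonoid (SBGen n) → Prop
  | inv_right (i) : SBRel n (of (.s i) * of (.si i)) 1
  | inv_left (i) : SBRel n (of (.si i) * of (.s i)) 1
  | sigma_tau (i) : SBRel n (of (.s i) * of (.t i)) (of (.t i) * of (.s i))
  | braid (i j) : adj i j →
      SBRel n (of (.s i) * of (.s j) * of (.s i)) (of (.s j) * of (.s i) * of (.s j))
  | braid_tau (i j) : adj i j →
      SBRel n (of (.s i) * of (.s j) * of (.t i)) (of (.t j) * of (.s i) * of (.s j))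
  | ss_comm (i j) : far i j → SBRel n (of (.s i) * of (.s j)) (of (.s j) * of (.s i))
  | st_comm (i j) : far i j → SBRel n (of (.s i) * of (.t j)) (of (.t j) * of (.s i))
  | tt_comm (i j) : far i j → SBRel n (of (.t i) * of (.t j)) (of (.t j) * of (.t i))

/-- The congruence generated by the singular braid relations. -/
def SBcon (n : ℕ) : Con (FreeMonoid (SBGen n)) := conGen (SBRel n)

/-- The singular braid monoid `SB_n`. -/
def SB (n : ℕ) : Type := (SBcon n).Quotient

instance (n : ℕ) : Monoid (SB n) := Con.monoid _

/-- The generator `σ_{i+1}` of `SB_n`. -/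
def sσ {n : ℕ} (i : Fin (n - 1)) : SB n := (SBcon n).mk' (FreeMonoid.of (.s i))
/-- The generator `σ_{i+1}⁻¹` of `SB_n`. -/
def sσi {n : ℕ} (i : Fin (n - 1)) : SB n := (SBcon n).mk' (FreeMonoid.of (.si i))
/-- The generator `τ_{i+1}` of `SB_n`. -/
def sτ {n : ℕ} (i : Fin (n - 1)) : SB n := (SBcon n).mk' (FreeMonoid.of (.t i))

/-- Number of singular points of a generator. -/
def genDeg {n : ℕ} : SBGen n → Multiplicative ℕ
  | .t _ => Multiplicative.ofAdd 1
  | _ => 1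

/-- Number of singular points of a word. -/
def degF (n : ℕ) : FreeMonoid (SBGen n) →* Multiplicative ℕ := FreeMonoid.lift genDeg

lemma degF_rel {n : ℕ} : SBcon n ≤ Con.ker (degF n) := by
  refine Con.conGen_le.mpr ?_
  rintro x y h
  rw [Con.ker_rel]
  cases h <;>
    simp [degF, genDeg, mul_comm]

/-- The number of singular points, as a monoid homomorphism. -/
def deg {n : ℕ} : SB n →* Multiplicative ℕ := Con.lift _ (degF n) degF_rel

/-- The number of singular points of a singular braid. -/
def ndeg {n : ℕ} (β : SB n) : ℕ := Multiplicative.toAdd (deg β)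

/-- `S_d B_n` : the set of singular braids on `n` strands with `d` singular points. -/
def SdB (d n : ℕ) : Set (SB n) := {β | ndeg β = d}

lemma ndeg_mul {n : ℕ} (α β : SB n) : ndeg (α * β) = ndeg α + ndeg β := by
  simp [ndeg, map_mul]

lemma ndeg_one {n : ℕ} : ndeg (1 : SB n) = 0 := by simp [ndeg]

lemma ndeg_pow {n : ℕ} (β : SB n) (m : ℕ) : ndeg (β ^ m) = m * ndeg β := by
  induction m with
  | zero => simp [ndeg_one]
  | succ m ih => rw [pow_succ, ndeg_mul, ih]; ring

lemma ndeg_sσ {n : ℕ} (i : Fin (n - 1)) : ndeg (sσ i) = 0 := rfl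

lemma ndeg_sσi {n : ℕ} (i : Fin (n - 1)) : ndeg (sσi i) = 0 := by
  rfl

lemma ndeg_sτ {n : ℕ} (i : Fin (n - 1)) : ndeg (sτ i) = 1 := by
  rfl

lemma mem_SdB {n d : ℕ} {β : SB n} (h : ndeg β = d) : β ∈ SdB d n := h
/-- The monoid algebra `𝕂[SB_n]`. -/
abbrev MA (n : ℕ) : Type := MonoidAlgebra K (SB n)

/-- The Hecke relations `σ_k² = (q-1)σ_k + q`. -/
def hrel (n : ℕ) : MA n → MA n → Prop := fun x y =>
  ∃ i : Fin (n - 1), x = (MonoidAlgebra.of K (SB n) (sσ i)) ^ 2 ∧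
    y = (q - 1) • MonoidAlgebra.of K (SB n) (sσ i) + q • 1

/-- The singular Hecke algebra `H(SB_n)`. -/
def H (n : ℕ) : Type := RingQuot (hrel n)

instance (n : ℕ) : Ring (H n) := inferInstanceAs (Ring (RingQuot (hrel n)))
instance (n : ℕ) : Algebra K (H n) := inferInstanceAs (Algebra K (RingQuot (hrel n)))

/-- The natural map `SB_n → H(SB_n)`. -/
def ιH {n : ℕ} (β : SB n) : H n := RingQuot.mkAlgHom K (hrel n) (MonoidAlgebra.of K (SB n) β)

/-- The image of `σ_{i+1}` in the singular Hecke algebra. -/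
def σH {n : ℕ} (i : Fin (n - 1)) : H n := ιH (sσ i)
/-- The image of `τ_{i+1}` in the singular Hecke algebra. -/
def τH {n : ℕ} (i : Fin (n - 1)) : H n := ιH (sτ i)

/-- Scalars inside the singular Hecke algebra. -/
def cK {n : ℕ} (c : K) : H n := algebraMap K (H n) c

/-- `H(S_d B_n)` : the 𝕂-subspace of `H(SB_n)` spanned by the braids with `d` singular points. -/
def HSd (d n : ℕ) : Submodule K (H n) := Submodule.span K (ιH '' SdB d n)

lemma ιH_mem {n d : ℕ} {β : SB n} (h : β ∈ SdB d n) : ιH β ∈ HSd d n :=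
  Submodule.subset_span ⟨β, h, rfl⟩

/-- Map on generators realizing the inclusion `SB_n ↪ SB_{n+1}`. -/
def genMap {n : ℕ} : SBGen n → SBGen (n + 1)
  | .s i => .s (Fin.castLE (by omega) i)
  | .si i => .si (Fin.castLE (by omega) i)
  | .t i => .t (Fin.castLE (by omega) i)

lemma incl_wd {n : ℕ} :
    SBcon n ≤ Con.ker ((SBcon (n + 1)).mk'.comp (FreeMonoid.map genMap)) := by
  refine Con.conGen_le.mpr ?_
  rintro x y h
  rw [Con.ker_rel]
  cases h with
  | inv_right i => exact (Con.eq _).mpr (ConGen.Rel.of _ _ (SBRel.inv_right _))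
  | inv_left i => exact (Con.eq _).mpr (ConGen.Rel.of _ _ (SBRel.inv_left _))
  | sigma_tau i => exact (Con.eq _).mpr (ConGen.Rel.of _ _ (SBRel.sigma_tau _))
  | braid i j hij =>
      refine (Con.eq _).mpr (ConGen.Rel.of _ _ (SBRel.braid _ _ ?_))
      simpa [adj] using hij
  | braid_tau i j hij =>
      refine (Con.eq _).mpr (ConGen.Rel.of _ _ (SBRel.braid_tau _ _ ?_))
      simpa [adj] using hij
  | ss_comm i j hij =>
      refine (Con.eq _).mpr (ConGen.Rel.of _ _ (SBRel.ss_comm _ _ ?_))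
      simpa [far] using hij
  | st_comm i j hij =>
      refine (Con.eq _).mpr (ConGen.Rel.of _ _ (SBRel.st_comm _ _ ?_))
      simpa [far] using hij
  | tt_comm i j hij =>
      refine (Con.eq _).mpr (ConGen.Rel.of _ _ (SBRel.tt_comm _ _ ?_))
      simpa [far] using hij

/-- The natural monoid homomorphism `SB_n → SB_{n+1}`. -/
def incl {n : ℕ} : SB n →* SB (n + 1) :=
  Con.lift _ ((SBcon (n + 1)).mk'.comp (FreeMonoid.map genMap)) incl_wd

lemma degF_genMap {n : ℕ} (w : FreeMonoid (SBGen n)) :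
    degF (n + 1) (FreeMonoid.map genMap w) = degF n w := by
  change ((degF (n+1)).comp (FreeMonoid.map genMap)) w = degF n w
  refine DFunLike.congr_fun (FreeMonoid.hom_eq fun a => ?_) w
  cases a <;> rfl

lemma ndeg_incl {n : ℕ} (β : SB n) : ndeg (incl β) = ndeg β := by
  induction β using Con.induction_on with
  | H w =>
    show Multiplicative.toAdd (degF (n + 1) (FreeMonoid.map genMap w)) =
      Multiplicative.toAdd (degF n w)
    rw [degF_genMap]

/-- The generator `σ_n` of `SB_{n+2}` (0-indexed `n`), used in the Markov condition. -/
def lastGen (n : ℕ) : Fin ((n + 2) - 1) := ⟨n, by omega⟩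

/-- A collection of 𝕂-linear maps `H(S_d B_n) → 𝕂(z)`, `n ≥ 1`
(index `n` in the collection corresponds to `n+1` strands). -/
abbrev TRc (d : ℕ) : Type := ∀ n : ℕ, HSd d (n + 1) →ₗ[K] Kz

/-- The Markov trace conditions. -/
def IsMarkov (d : ℕ) (T : TRc d) : Prop :=
  (∀ (n k l : ℕ) (α β : SB (n + 1)), α ∈ SdB k (n + 1) → β ∈ SdB l (n + 1) → k + l = d →
    ∀ (h₁ : ιH (α * β) ∈ HSd d (n + 1)) (h₂ : ιH (β * α) ∈ HSd d (n + 1)),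
      T n ⟨ιH (α * β), h₁⟩ = T n ⟨ιH (β * α), h₂⟩) ∧
  (∀ (n : ℕ) (β : SB (n + 1)), β ∈ SdB d (n + 1) →
    ∀ (h₁ : ιH (incl β) ∈ HSd d (n + 2)) (h₂ : ιH β ∈ HSd d (n + 1)),
      T (n + 1) ⟨ιH (incl β), h₁⟩ = T n ⟨ιH β, h₂⟩) ∧
  (∀ (n : ℕ) (β : SB (n + 1)), β ∈ SdB d (n + 1) →
    ∀ (h₁ : ιH (incl β * sσ (lastGen n)) ∈ HSd d (n + 2)) (h₂ : ιH β ∈ HSd d (n + 1)),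
      T (n + 1) ⟨ιH (incl β * sσ (lastGen n)), h₁⟩ = z * T n ⟨ιH β, h₂⟩)

/-- `TR_d` : the 𝕂(z)-vector space of Markov traces on `{H(S_d B_n)}ₙ`. -/
def TR (d : ℕ) : Submodule Kz (TRc d) where
  carrier := {T | IsMarkov d T}
  add_mem' := by
    rintro a b ⟨ha1, ha2, ha3⟩ ⟨hb1, hb2, hb3⟩
    refine ⟨?_, ?_, ?_⟩
    · intro n k l α β hα hβ hkl h₁ h₂
      simp only [Pi.add_apply, LinearMap.add_apply,
        ha1 n k l α β hα hβ hkl h₁ h₂, hb1 n k l α β hα hβ hkl h₁ h₂]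
    · intro n β hβ h₁ h₂
      simp only [Pi.add_apply, LinearMap.add_apply, ha2 n β hβ h₁ h₂, hb2 n β hβ h₁ h₂]
    · intro n β hβ h₁ h₂
      simp only [Pi.add_apply, LinearMap.add_apply, ha3 n β hβ h₁ h₂, hb3 n β hβ h₁ h₂]
      ring
  zero_mem' := by
    refine ⟨?_, ?_, ?_⟩ <;> intros <;> simp
  smul_mem' := by
    rintro c a ⟨ha1, ha2, ha3⟩
    refine ⟨?_, ?_, ?_⟩
    · intro n k l α β hα hβ hkl h₁ h₂
      simp only [Pi.smul_apply, LinearMap.smul_apply, ha1 n k l α β hα hβ hkl h₁ h₂]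
    · intro n β hβ h₁ h₂
      simp only [Pi.smul_apply, LinearMap.smul_apply, ha2 n β hβ h₁ h₂]
    · intro n β hβ h₁ h₂
      simp only [Pi.smul_apply, LinearMap.smul_apply, ha3 n β hβ h₁ h₂, smul_eq_mul]
      ring

lemma ndeg_list_prod {n : ℕ} (l : List (SB n)) : ndeg l.prod = (l.map ndeg).sum := by
  induction l with
  | nil => simpa using ndeg_one
  | cons a l ih => simp [ndeg_mul, ih]

lemma mem_expr {m d : ℕ} (α : Fin (d + 1) → SB m) (hα : ∀ j, α j ∈ SdB 0 m)
    (idx : Fin d → Fin (m - 1)) :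
    (α 0 * (List.ofFn fun j : Fin d => sτ (idx j) * α j.succ).prod) ∈ SdB d m := by
  refine mem_SdB ?_
  rw [ndeg_mul, ndeg_list_prod, List.map_ofFn, hα 0]
  have h : (fun j : Fin d => ndeg (sτ (idx j) * α j.succ)) = fun _ => 1 := by
    funext j; rw [ndeg_mul, ndeg_sτ, hα j.succ]
  rw [show ndeg ∘ (fun j : Fin d => sτ (idx j) * α j.succ)
      = fun j : Fin d => ndeg (sτ (idx j) * α j.succ) from rfl, h]
  simp

lemma mem_exprS {m d : ℕ} (α : Fin (d + 1) → SB m) (hα : ∀ j, α j ∈ SdB 0 m)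
    (idx : Fin d → Fin (m - 1)) (S : Finset (Fin d)) :
    (α 0 * (List.ofFn fun j : Fin d =>
      (if j ∈ S then sσ (idx j) else 1) * α j.succ).prod) ∈ SdB 0 m := by
  refine mem_SdB ?_
  rw [ndeg_mul, ndeg_list_prod, List.map_ofFn, hα 0]
  have h : (fun j : Fin d => ndeg ((if j ∈ S then sσ (idx j) else 1) * α j.succ))
      = fun _ => 0 := by
    funext j
    rw [ndeg_mul, hα j.succ]
    split <;> simp [ndeg_sσ, ndeg_one]
  rw [show ndeg ∘ (fun j : Fin d => (if j ∈ S then sσ (idx j) else 1) * α j.succ)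
      = fun j : Fin d => ndeg ((if j ∈ S then sσ (idx j) else 1) * α j.succ) from rfl, h]
  simp

lemma mem_tau_pow {n : ℕ} (i : Fin (n - 1)) (d : ℕ) : (sτ i) ^ d ∈ SdB d n := by
  refine mem_SdB ?_; simp [ndeg_pow, ndeg_sτ]

lemma mem_tau_pow_sigma {n : ℕ} (i i' : Fin (n - 1)) (d : ℕ) :
    (sτ i) ^ d * sσ i' ∈ SdB d n := by
  refine mem_SdB ?_; simp [ndeg_mul, ndeg_pow, ndeg_sτ, ndeg_sσ]

lemma mem_tau_tau {n : ℕ} (i i' : Fin (n - 1)) (a b : ℕ) :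
    (sτ i) ^ a * (sτ i') ^ b ∈ SdB (a + b) n := by
  refine mem_SdB ?_; simp [ndeg_mul, ndeg_pow, ndeg_sτ]

lemma mem_tau_tau_sigma {n : ℕ} (i i' i'' : Fin (n - 1)) (a b : ℕ) :
    (sτ i) ^ a * (sτ i') ^ b * sσ i'' ∈ SdB (a + b) n := by
  refine mem_SdB ?_; simp [ndeg_mul, ndeg_pow, ndeg_sτ, ndeg_sσ]

/-- `σ_{i+1}` with out-of-range indices interpreted as `1`. -/
def sσ' (n : ℕ) (i : ℕ) : SB n := if h : i < n - 1 then sσ ⟨i, h⟩ else 1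

/-- `descChain n m = σ_{n-1} σ_{n-2} ⋯ σ_{n-m}` (1-indexed), `m` letters. -/
def descChain (n : ℕ) : ℕ → SB n
  | 0 => 1
  | m + 1 => descChain n m * sσ' n (n - 2 - m)

/-- The sets `ℬ_n` describing the standard basis of the Hecke algebra `H(B_n)`:
`ℬ_1 = {1}` and `ℬ_n = {β u : β ∈ ℬ_{n-1}, u ∈ U_n}` where
`U_n = {1, σ_{n-1}, σ_{n-1}σ_{n-2}, …, σ_{n-1}⋯σ_1}`. -/
def Bset : (n : ℕ) → Set (SB n)
  | 0 => {1}
  | n + 1 => {x | ∃ β ∈ Bset n, ∃ m ≤ n, x = incl β * descChain (n + 1) m}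

/-- The set `𝒞_{d,n}` of singular braids of the form `τ_{i_1} ⋯ τ_{i_d} β` with `β ∈ ℬ_n`. -/
def Cdn (d n : ℕ) : Set (SB n) :=
  {x | ∃ idx : Fin d → Fin (n - 1), ∃ β ∈ Bset n,
    x = (List.ofFn fun j : Fin d => sτ (idx j)).prod * β}

lemma cK_comm {n : ℕ} (c : K) (x : H n) : x * cK c = cK c * x :=
  (Algebra.commutes c x).symm

lemma cK_mul_cK {n : ℕ} (c d : K) : (cK c : H n) * cK d = cK (c * d) :=
  (map_mul (algebraMap K (H n)) c d).symm

lemma ιH_mul {n : ℕ} (α β : SB n) : ιH (α * β) = ιH α * ιH β := by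
  unfold ιH
  rw [map_mul (MonoidAlgebra.of K (SB n)) α β, map_mul]
  rfl

lemma hecke_sq {n : ℕ} (k : Fin (n - 1)) :
    (σH k : H n) * σH k = cK (q - 1) * σH k + cK q := by
  have hw : hrel n ((MonoidAlgebra.of K (SB n) (sσ k)) ^ 2)
      ((q - 1) • MonoidAlgebra.of K (SB n) (sσ k) + q • 1) := ⟨k, rfl, rfl⟩
  have h := RingQuot.mkAlgHom_rel (S := K) hw
  rw [pow_two, map_mul, map_add, map_smul, map_smul, map_one] at h
  rw [Algebra.smul_def (q-1) (RingQuot.mkAlgHom K (hrel n) (MonoidAlgebra.of K (SB n) (sσ k))), Algebra.smul_def q (1 : RingQuot (hrel n)), mul_one] at h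
  exact h

lemma braidH {n : ℕ} (i j : Fin (n - 1)) (hij : adj i j) :
    (σH i : H n) * σH j * σH i = σH j * σH i * σH j := by
  have hm : ∀ a b : FreeMonoid (SBGen n),
      (SBcon n).mk' a * (SBcon n).mk' b = (SBcon n).mk' (a * b) :=
    fun a b => (map_mul _ a b).symm
  have hsb : sσ i * sσ j * sσ i = sσ j * sσ i * sσ j := by
    unfold sσ
    erw [hm, hm]
    exact (Con.eq _).mpr (ConGen.Rel.of _ _ (SBRel.braid i j hij))
  have h := congrArg ιH hsb
  rw [ιH_mul, ιH_mul, ιH_mul, ιH_mul] at h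
  exact h

lemma q_ne_zero : (q : K) ≠ 0 := RatFunc.X_ne_zero

lemma q_add_one_ne_zero : (q + 1 : K) ≠ 0 := by
  have h : (q + 1 : K) = algebraMap (Polynomial ℂ) K (Polynomial.X + 1) := by
    rw [map_add, map_one, RatFunc.algebraMap_X]; rfl
  rw [h]
  intro hc
  have h0 : (Polynomial.X + 1 : Polynomial ℂ) = 0 :=
    IsFractionRing.injective (Polynomial ℂ) K (by rw [hc, map_zero])
  simpa using congrArg (Polynomial.eval 0) h0

set_option maxHeartbeats 2000000 in
lemma abstract_key {F A : Type} [Field F] [Ring A] [Algebra F A] (t : F) (a b : A)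
    (haa : a * a = algebraMap F A (t - 1) * a + algebraMap F A t)
    (hbb : b * b = algebraMap F A (t - 1) * b + algebraMap F A t)
    (hbr : a * b * a = b * a * b) :
    (a + b - algebraMap F A (t - 1)) *
      (algebraMap F A (t * (t - 1)) - algebraMap F A (2 * t) * a
        - algebraMap F A (2 * t) * b
        - algebraMap F A (t - 1) * (a * b) - algebraMap F A (t - 1) * (b * a)
        + algebraMap F A 2 * (a * b * a)) = algebraMap F A (-(t * (t + 1) ^ 2)) ∧
    (algebraMap F A (t * (t - 1)) - algebraMap F A (2 * t) * a
        - algebraMap F A (2 * t) * b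
        - algebraMap F A (t - 1) * (a * b) - algebraMap F A (t - 1) * (b * a)
        + algebraMap F A 2 * (a * b * a)) *
      (a + b - algebraMap F A (t - 1)) = algebraMap F A (-(t * (t + 1) ^ 2)) := by
  have haa' : ∀ x : A, a * (a * x) = algebraMap F A (t - 1) * (a * x) + algebraMap F A t * x := by
    intro x; rw [← mul_assoc, haa, add_mul, mul_assoc]
  have hbb' : ∀ x : A, b * (b * x) = algebraMap F A (t - 1) * (b * x) + algebraMap F A t * x := by
    intro x; rw [← mul_assoc, hbb, add_mul, mul_assoc]
  have hbr1 : b * (a * b) = a * (b * a) := by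
    rw [← mul_assoc, ← hbr, mul_assoc]
  have hbr2 : ∀ x : A, b * (a * (b * x)) = a * (b * (a * x)) := by
    intro x
    rw [← mul_assoc, ← mul_assoc, ← mul_assoc, ← mul_assoc, ← hbr]
  have hca : ∀ (c : F) (x : A), a * (algebraMap F A c * x) = algebraMap F A c * (a * x) := by
    intro c x; rw [← mul_assoc, ← Algebra.commutes c a, mul_assoc]
  have hcb : ∀ (c : F) (x : A), b * (algebraMap F A c * x) = algebraMap F A c * (b * x) := by
    intro c x; rw [← mul_assoc, ← Algebra.commutes c b, mul_assoc]
  have hc1a : ∀ c : F, a * algebraMap F A c = algebraMap F A c * a :=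
    fun c => (Algebra.commutes c a).symm
  have hc1b : ∀ c : F, b * algebraMap F A c = algebraMap F A c * b :=
    fun c => (Algebra.commutes c b).symm
  have cc : ∀ c d : F, algebraMap F A c * algebraMap F A d = algebraMap F A (c * d) :=
    fun c d => (map_mul _ c d).symm
  have cc' : ∀ (c d : F) (x : A),
      algebraMap F A c * (algebraMap F A d * x) = algebraMap F A (c * d) * x := by
    intro c d x; rw [← mul_assoc, ← map_mul]
  constructor <;>
  · simp only [mul_add, mul_sub, add_mul, sub_mul, neg_mul, mul_neg, mul_assoc, mul_one,
      one_mul, haa, hbb, haa', hbb', hbr1, hbr2, hca, hcb, hc1a, hc1b, cc, cc']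
    simp only [← Algebra.smul_def, Algebra.algebraMap_eq_smul_one]
    simp only [smul_mul_assoc, one_mul]
    match_scalars <;> ring

lemma scalar_eq : (q⁻¹ * ((q + 1) ^ 2)⁻¹) * -(q * (q + 1) ^ 2) = (-1 : K) := by
  have h1 := q_ne_zero
  have h2 := q_add_one_ne_zero
  field_simp

/-- For `|i-j| = 1`, the element `B_{ij} = σ_i + σ_j − (q−1)` is invertible
in `H(SB_n)`, with inverse
`−q⁻¹(q+1)⁻² (q(q−1) − 2qσ_i − 2qσ_j − (q−1)σ_iσ_j − (q−1)σ_jσ_i + 2σ_iσ_jσ_i)`. -/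
theorem statement11 (n : ℕ) (hn : 3 ≤ n) (i j : Fin (n - 1)) (hij : adj i j) :
    (σH i + σH j - cK (q - 1)) *
      (-(cK (q⁻¹ * ((q + 1) ^ 2)⁻¹)) *
        (cK (q * (q - 1)) - cK (2 * q) * σH i - cK (2 * q) * σH j
          - cK (q - 1) * (σH i * σH j) - cK (q - 1) * (σH j * σH i)
          + cK 2 * (σH i * σH j * σH i))) = 1 ∧
    (-(cK (q⁻¹ * ((q + 1) ^ 2)⁻¹)) *
        (cK (q * (q - 1)) - cK (2 * q) * σH i - cK (2 * q) * σH j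
          - cK (q - 1) * (σH i * σH j) - cK (q - 1) * (σH j * σH i)
          + cK 2 * (σH i * σH j * σH i))) *
      (σH i + σH j - cK (q - 1)) = 1 := by
  have key := abstract_key q (σH i) (σH j) (hecke_sq i) (hecke_sq j) (braidH i j hij)
  simp only [cK]
  constructor
  · rw [neg_mul, mul_neg, ← mul_assoc,
      (Algebra.commutes (q⁻¹ * ((q + 1) ^ 2)⁻¹) (σH i + σH j - algebraMap K (H n) (q - 1))).symm,
      mul_assoc, key.1, ← map_mul, scalar_eq, map_neg, map_one, neg_neg]
  · rw [neg_mul, neg_mul, mul_assoc, key.2, ← map_mul, scalar_eq, map_neg,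
      map_one, neg_neg]
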